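/- Let G be a finite group, N a normal subgroup, and H a subgroup of G with gcd(|H|, |N|) = 1. If T is a subgroup of G with G = HT and gcd(|G : T|, |N|) = 1, then N ≤ T. -/

import Mathlib

open scoped Pointwise

/-- Second isomorphism theorem at the level of indices: if `N` is normal,
then `|T ⊔ N : T| = |N : T ⊓ N|`. -/
lemma aux_relindex_sup {G : Type*} [Group G] (T N : Subgroup G) (hN : N.Normal) :
    T.relIndex (T ⊔ N) = T.relIndex N := by
  apply Nat.card_congr
  symm
  refine Equiv.ofBijective
    (Quotient.map' (fun n : N => (⟨(n : G), Subgroup.mem_sup_right n.2⟩ : (T ⊔ N : Subgroup G)))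
      (fun a b h => ?_)) ⟨fun a b => ?_, fun x => ?_⟩
  · rw [QuotientGroup.leftRel_apply] at h ⊢
    exact h
  · refine Quotient.inductionOn₂' a b (fun a b hab => ?_)
    rw [Quotient.map'_mk'', Quotient.map'_mk''] at hab
    apply Quotient.sound'
    rw [QuotientGroup.leftRel_apply]
    have := Quotient.exact' hab
    rw [QuotientGroup.leftRel_apply] at this
    exact this
  · refine Quotient.inductionOn' x (fun x => ?_)
    have hx : (x : G) ∈ (↑N * ↑T : Set G) := by
      rw [← Subgroup.normal_mul N T, sup_comm]
      exact x.2
    obtain ⟨n, hn, t, ht, hnt⟩ := hx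
    refine ⟨Quotient.mk'' ⟨n, hn⟩, ?_⟩
    rw [Quotient.map'_mk'']
    apply Quotient.sound'
    rw [QuotientGroup.leftRel_apply]
    show (n⁻¹ * (x : G)) ∈ T
    rw [← hnt]
    simpa using ht

/-- if `G = HT` with `gcd(|H|,|N|) = 1` and `gcd(|G:T|,|N|) = 1` for a normal
subgroup `N`, then `N ≤ T`. -/
theorem stmt_7 {G : Type*} [Group G] [Finite G] (N H T : Subgroup G)
    (hN : N.Normal) (hcop : Nat.Coprime (Nat.card H) (Nat.card N))
    (hHT : (H : Set G) * (T : Set G) = Set.univ)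
    (hcop' : Nat.Coprime T.index (Nat.card N)) :
    N ≤ T := by
  have h1 : T.relIndex N ∣ T.index := by
    rw [← aux_relindex_sup T N hN]
    exact Subgroup.relIndex_dvd_index_of_le le_sup_left
  have h2 : T.relIndex N ∣ Nat.card N := Subgroup.index_dvd_card (T.subgroupOf N)
  exact Subgroup.relIndex_eq_one.mp (Nat.eq_one_of_dvd_coprimes hcop' h1 h2)
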